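/- arXiv:1402.5884 — 2 statements merged into one kernel-verified Lean document; each statement's English description precedes it below -/
import Mathlib

section
/- (Failure of the Armijo test forces the gradients to be far apart.) Let x ∈ C, β > 0, δ ∈ (0,1), t ∈ (0,1], set w = P_C(x − β∇f(x)) and ŷ = t w + (1 − t) x. If f(ŷ) > f(x) − δ t ⟨∇f(x), x − w⟩, then ‖∇f(ŷ) − ∇f(x)‖ ‖x − w‖ ≥ (1 − δ)⟨∇f(x), x − w⟩ ≥ ((1 − δ)/β) ‖x − w‖²; in particular ‖∇f(ŷ) − ∇f(x)‖ ≥ ((1 − δ)/β) ‖x − w‖. -/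
open Filter
open scoped RealInnerProductSpace

lemma grad_ineq_aux
    {H : Type*} [NormedAddCommGroup H] [InnerProductSpace ℝ H]
    (f : H → ℝ) (hf : ConvexOn ℝ Set.univ f)
    (gradf : H → H)
    (hgrad : ∀ x d : H,
      Tendsto (fun t : ℝ => (f (x + t • d) - f x) / t) (nhdsWithin 0 (Set.Ioi 0))
        (nhds ⟪gradf x, d⟫))
    (y z : H) : ⟪gradf y, z - y⟫ ≤ f z - f y := by
  refine le_of_tendsto (hgrad y (z - y)) ?_
  filter_upwards [Ioc_mem_nhdsGT_of_mem (by norm_num : (0:ℝ) ∈ Set.Ico (0:ℝ) 1)]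
    with s hs
  have hs0 : 0 < s := hs.1
  have hs1 : s ≤ 1 := hs.2
  have hc := hf.2 (Set.mem_univ y) (Set.mem_univ z) (by linarith : (0:ℝ) ≤ 1 - s)
    (le_of_lt hs0) (by ring)
  simp only [smul_eq_mul] at hc
  have heq : y + s • (z - y) = (1 - s) • y + s • z := by
    module
  rw [div_le_iff₀ hs0, heq]
  calc f ((1 - s) • y + s • z) - f y ≤ (1 - s) * f y + s * f z - f y := by linarith
    _ = (f z - f y) * s := by ring

theorem stmt_8
    {H : Type*} [NormedAddCommGroup H] [InnerProductSpace ℝ H] [CompleteSpace H]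
    (C : Set H) (hCne : C.Nonempty) (hCcl : IsClosed C) (hCcv : Convex ℝ C)
    (f : H → ℝ) (hf : ConvexOn ℝ Set.univ f)
    (gradf : H → H)
    (hgrad : ∀ x d : H,
      Tendsto (fun t : ℝ => (f (x + t • d) - f x) / t) (nhdsWithin 0 (Set.Ioi 0))
        (nhds ⟪gradf x, d⟫))
    (PC : H → H)
    (hPC : ∀ x : H, PC x ∈ C ∧ ∀ z ∈ C, ⟪x - PC x, z - PC x⟫ ≤ 0)
    (x₀ : H) (hx₀ : x₀ ∈ C) (b δ t : ℝ) (hb : 0 < b)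
    (hδ : δ ∈ Set.Ioo (0:ℝ) 1) (ht : t ∈ Set.Ioc (0:ℝ) 1)
    (w yhat : H) (hw : w = PC (x₀ - b • gradf x₀)) (hy : yhat = t • w + (1 - t) • x₀)
    (hfail : f yhat > f x₀ - δ * t * ⟪gradf x₀, x₀ - w⟫)
    : ‖gradf yhat - gradf x₀‖ * ‖x₀ - w‖ ≥ (1 - δ) * ⟪gradf x₀, x₀ - w⟫ ∧
      (1 - δ) * ⟪gradf x₀, x₀ - w⟫ ≥ ((1 - δ) / b) * ‖x₀ - w‖ ^ 2 ∧
      ‖gradf yhat - gradf x₀‖ ≥ ((1 - δ) / b) * ‖x₀ - w‖ := by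
  set ip := ⟪gradf x₀, x₀ - w⟫ with hip
  have ht0 : 0 < t := ht.1
  have hδ1 : 0 < 1 - δ := by linarith [hδ.2]
  -- projection inequality
  have hproj : ⟪(x₀ - b • gradf x₀) - w, x₀ - w⟫ ≤ 0 := by
    rw [hw]; exact (hPC (x₀ - b • gradf x₀)).2 x₀ hx₀
  have hexp : ⟪(x₀ - b • gradf x₀) - w, x₀ - w⟫ = ‖x₀ - w‖ ^ 2 - b * ip := by
    have : (x₀ - b • gradf x₀) - w = (x₀ - w) - b • gradf x₀ := by abel
    rw [this, inner_sub_left, real_inner_smul_left, real_inner_self_eq_norm_sq, hip]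
  have hns : ‖x₀ - w‖ ^ 2 ≤ b * ip := by rw [hexp] at hproj; linarith
  have hipnn : ((1 - δ) / b) * ‖x₀ - w‖ ^ 2 ≤ (1 - δ) * ip := by
    rw [div_mul_eq_mul_div, div_le_iff₀ hb]
    calc (1 - δ) * ‖x₀ - w‖ ^ 2 ≤ (1 - δ) * (b * ip) :=
          mul_le_mul_of_nonneg_left hns (le_of_lt hδ1)
      _ = (1 - δ) * ip * b := by ring
  -- gradient inequality at yhat
  have hgi := grad_ineq_aux f hf gradf hgrad yhat x₀
  have hxy : x₀ - yhat = t • (x₀ - w) := by rw [hy]; module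
  have hgi' : t * ⟪gradf yhat, x₀ - w⟫ ≤ f x₀ - f yhat := by
    have : ⟪gradf yhat, x₀ - yhat⟫ = t * ⟪gradf yhat, x₀ - w⟫ := by
      rw [hxy, real_inner_smul_right]
    linarith [hgi, this ▸ hgi]
  have hlt : ⟪gradf yhat, x₀ - w⟫ < δ * ip := by
    have h1 : f x₀ - f yhat < δ * t * ip := by linarith [hfail]
    have h2 : t * ⟪gradf yhat, x₀ - w⟫ < t * (δ * ip) := by
      calc t * ⟪gradf yhat, x₀ - w⟫ ≤ f x₀ - f yhat := hgi'
        _ < δ * t * ip := h1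
        _ = t * (δ * ip) := by ring
    exact lt_of_mul_lt_mul_left h2 (le_of_lt ht0)
  have hfirst : (1 - δ) * ip ≤ ‖gradf yhat - gradf x₀‖ * ‖x₀ - w‖ := by
    have hcs : ⟪gradf x₀ - gradf yhat, x₀ - w⟫ ≤ ‖gradf x₀ - gradf yhat‖ * ‖x₀ - w‖ :=
      real_inner_le_norm _ _
    rw [inner_sub_left] at hcs
    rw [norm_sub_rev (gradf x₀) (gradf yhat)] at hcs
    linarith
  refine ⟨hfirst, hipnn, ?_⟩
  by_cases hnz : ‖x₀ - w‖ = 0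
  · rw [hnz]; simpa using mul_nonneg (by positivity) (norm_nonneg (x₀ - w))
  · have hpos : 0 < ‖x₀ - w‖ := lt_of_le_of_ne (norm_nonneg _) (Ne.symm hnz)
    have : ((1 - δ) / b) * ‖x₀ - w‖ * ‖x₀ - w‖ ≤ ‖gradf yhat - gradf x₀‖ * ‖x₀ - w‖ := by
      calc ((1 - δ) / b) * ‖x₀ - w‖ * ‖x₀ - w‖ = ((1 - δ) / b) * ‖x₀ - w‖ ^ 2 := by ring
        _ ≤ (1 - δ) * ip := hipnn
        _ ≤ _ := hfirst
    exact le_of_mul_le_mul_right this hpos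
end

section
/- Assume S_* ≠ ∅ and that ∇f is uniformly continuous on every bounded subset of H. Then the sequence (x^k)_{k∈ℕ} generated by Algorithm A2 converges strongly (in norm) to x_* = P_{S_*}(x^0), the solution of the problem min_{x∈C} f(x) closest to the initial iterate x^0. -/
open Filter Topology
open scoped RealInnerProductSpace

section Aux
variable {H : Type*} [NormedAddCommGroup H] [InnerProductSpace ℝ H]

theorem aux_subgrad (f : H → ℝ) (hf : ConvexOn ℝ Set.univ f) (gradf : H → H)
    (hgrad : ∀ x d : H,
      Tendsto (fun t : ℝ => (f (x + t • d) - f x) / t) (nhdsWithin 0 (Set.Ioi 0))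
        (nhds ⟪gradf x, d⟫)) (a b : H) :
    f a + ⟪gradf a, b - a⟫ ≤ f b := by
  have key : ∀ t : ℝ, t ∈ Set.Ioo (0:ℝ) 1 → (f (a + t • (b - a)) - f a) / t ≤ f b - f a := by
    intro t ht
    have h1 : f (a + t • (b - a)) ≤ (1 - t) * f a + t * f b := by
      have := hf.2 (Set.mem_univ b) (Set.mem_univ a) (le_of_lt ht.1) (by linarith [ht.2]) (by ring : t + (1 - t) = 1)
      calc f (a + t • (b - a)) = f (t • b + (1 - t) • a) := by
            congr 1; module
        _ ≤ t * f b + (1 - t) * f a := this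
        _ = (1 - t) * f a + t * f b := by ring
    rw [div_le_iff₀ ht.1]
    nlinarith
  have hmem : Set.Ioo (0:ℝ) 1 ∈ nhdsWithin (0:ℝ) (Set.Ioi 0) :=
    mem_nhdsWithin.2 ⟨Set.Iio 1, isOpen_Iio, by norm_num, by intro y hy; exact ⟨hy.2, hy.1⟩⟩
  have := le_of_tendsto (hgrad a (b - a)) (eventually_of_mem hmem key)
  linarith

theorem aux_vi (K : Set H) (hK : Convex ℝ K) (u p : H) (hu : u ∈ K)
    (hmin : ∀ y ∈ K, ‖u - p‖ ≤ ‖y - p‖) :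
    ∀ y ∈ K, ⟪p - u, y - u⟫ ≤ 0 := by
  intro y hy
  have key : ∀ t : ℝ, t ∈ Set.Ioo (0:ℝ) 1 → 0 ≤ 2 * ⟪u - p, y - u⟫ + t * ‖y - u‖^2 := by
    intro t ht
    have hmem : u + t • (y - u) ∈ K := by
      have := hK hu hy (by linarith [ht.2] : (0:ℝ) ≤ 1 - t) (le_of_lt ht.1) (by ring)
      convert this using 1; module
    have h2 := hmin _ hmem
    have h3 : ‖u - p‖^2 ≤ ‖(u - p) + t • (y - u)‖^2 := by
      have : u + t • (y - u) - p = (u - p) + t • (y - u) := by abel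
      rw [← this]
      exact pow_le_pow_left₀ (norm_nonneg _) h2 2
    rw [norm_add_sq_real] at h3
    rw [real_inner_smul_right, norm_smul] at h3
    simp only [Real.norm_eq_abs, abs_of_pos ht.1] at h3
    nlinarith [ht.1]
  have hmem : Set.Ioo (0:ℝ) 1 ∈ nhdsWithin (0:ℝ) (Set.Ioi 0) :=
    mem_nhdsWithin.2 ⟨Set.Iio 1, isOpen_Iio, by norm_num, by intro s hs; exact ⟨hs.2, hs.1⟩⟩
  have hten : Tendsto (fun t : ℝ => 2 * ⟪u - p, y - u⟫ + t * ‖y - u‖^2)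
      (nhdsWithin 0 (Set.Ioi 0)) (𝓝 (2 * ⟪u - p, y - u⟫)) := by
    have : Tendsto (fun t : ℝ => 2 * ⟪u - p, y - u⟫ + t * ‖y - u‖^2) (𝓝 0)
        (𝓝 (2 * ⟪u - p, y - u⟫ + 0 * ‖y - u‖^2)) := by
      apply Continuous.tendsto; continuity
    simpa using this.mono_left nhdsWithin_le_nhds
  have := ge_of_tendsto hten (eventually_of_mem hmem key)
  have h4 : ⟪p - u, y - u⟫ = - ⟪u - p, y - u⟫ := by
    rw [← inner_neg_left]; congr 1; abel
  linarith

theorem aux_gradbound (gradf : H → H)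
    (hUC : ∀ B : Set H, Bornology.IsBounded B → ∀ ε > 0, ∃ η > 0,
      ∀ a ∈ B, ∀ b ∈ B, ‖a - b‖ < η → ‖gradf a - gradf b‖ < ε)
    (c : H) (M : ℝ) :
    ∃ G : ℝ, 0 ≤ G ∧ ∀ y : H, ‖y - c‖ ≤ M → ‖gradf y‖ ≤ G := by
  obtain ⟨η, hη, hbd⟩ := hUC (Metric.closedBall c M) Metric.isBounded_closedBall 1 one_pos
  obtain ⟨N, hN⟩ := exists_nat_gt (M / η)
  refine ⟨max (‖gradf c‖ + (N + 1)) 0, le_max_right _ _, ?_⟩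
  intro y hy
  apply le_max_of_le_left
  set n : ℕ := N + 1 with hn
  have hnpos : (0:ℝ) < (n:ℝ) := by exact_mod_cast Nat.succ_pos N
  have hMn : M / n < η := by
    rw [div_lt_iff₀ hnpos]
    have h7 : M / η < (n:ℝ) := by push_cast [hn]; linarith
    calc M = (M / η) * η := by field_simp
      _ < n * η := by apply mul_lt_mul_of_pos_right h7 hη
      _ = _ := mul_comm _ _
  have key : ∀ i : ℕ, i ≤ n → ‖gradf (c + ((i:ℝ)/n) • (y - c))‖ ≤ ‖gradf c‖ + i := by
    intro i
    induction i with
    | zero => intro _; simp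
    | succ m ih =>
      intro hmn
      have hm : m ≤ n := Nat.le_of_succ_le hmn
      have ihm := ih hm
      set p := c + ((m:ℝ)/n) • (y - c)
      set q := c + (((m+1:ℕ):ℝ)/n) • (y - c)
      have hmem : ∀ i : ℕ, i ≤ n → c + ((i:ℝ)/n) • (y - c) ∈ Metric.closedBall c M := by
        intro i hi
        rw [Metric.mem_closedBall, dist_eq_norm]
        have h8 : c + ((i:ℝ)/n) • (y - c) - c = ((i:ℝ)/n) • (y - c) := by abel
        rw [h8, norm_smul, Real.norm_eq_abs]
        have h1 : (0:ℝ) ≤ (i:ℝ)/n := by positivity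
        have h2 : (i:ℝ)/n ≤ 1 := by
          rw [div_le_one hnpos]; exact_mod_cast hi
        rw [abs_of_nonneg h1]
        calc ((i:ℝ)/n) * ‖y - c‖ ≤ 1 * ‖y - c‖ := by
              apply mul_le_mul_of_nonneg_right h2 (norm_nonneg _)
          _ = ‖y - c‖ := one_mul _
          _ ≤ M := hy
      have hpq : ‖q - p‖ < η := by
        have h9 : q - p = ((1:ℝ)/n) • (y - c) := by
          simp only [p, q]
          rw [show c + (((m+1:ℕ):ℝ)/n) • (y - c) - (c + ((m:ℝ)/n) • (y - c))
            = ((((m+1:ℕ):ℝ)/n) - ((m:ℝ)/n)) • (y - c) by rw [sub_smul]; abel]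
          congr 1
          push_cast; ring
        rw [h9, norm_smul, Real.norm_eq_abs, abs_of_pos (by positivity : (0:ℝ) < 1/(n:ℝ))]
        calc 1/(n:ℝ) * ‖y - c‖ ≤ 1/n * M := by
              apply mul_le_mul_of_nonneg_left hy (by positivity)
          _ = M / n := by ring
          _ < η := hMn
      have h10 := hbd q (hmem _ hmn) p (hmem _ hm) hpq
      have h5 : ‖gradf q‖ ≤ ‖gradf p‖ + 1 := by
        have h6 := norm_sub_norm_le (gradf q) (gradf p)
        linarith
      push_cast
      calc ‖gradf q‖ ≤ ‖gradf p‖ + 1 := h5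
        _ ≤ ‖gradf c‖ + (m + 1) := by push_cast at ihm ⊢; linarith
  have hkey := key n le_rfl
  have hyn : c + ((n:ℝ)/n) • (y - c) = y := by
    rw [div_self (ne_of_gt hnpos), one_smul]; abel
  rw [hyn] at hkey
  push_cast [hn] at hkey ⊢
  linarith

theorem weak_seq_compact {H : Type*} [NormedAddCommGroup H] [InnerProductSpace ℝ H]
    [CompleteSpace H] (u : ℕ → H) (M : ℝ) (hM : ∀ k, ‖u k‖ ≤ M) :
    ∃ φ : ℕ → ℕ, StrictMono φ ∧ ∃ w : H,
      ∀ v : H, Tendsto (fun n => ⟪v, u (φ n)⟫) atTop (𝓝 ⟪v, w⟫) := by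
  have hM0 : 0 ≤ M := le_trans (norm_nonneg _) (hM 0)
  -- diagonal: pick subsequence converging against all u m
  set g : ℕ → (ℕ → ℝ) := fun k m => ⟪u m, u k⟫ with hg
  have hgmem : ∀ k, g k ∈ Set.univ.pi (fun _ : ℕ => Set.Icc (-(M*M)) (M*M)) := by
    intro k m _
    have h1 : |⟪u m, u k⟫| ≤ ‖u m‖ * ‖u k‖ := abs_real_inner_le_norm _ _
    have h2 : ‖u m‖ * ‖u k‖ ≤ M * M :=
      mul_le_mul (hM m) (hM k) (norm_nonneg _) hM0
    constructor <;> [linarith [abs_le.1 (le_trans h1 h2)]; linarith [abs_le.1 (le_trans h1 h2)]]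
  obtain ⟨p, _, φ, hφ, hconv⟩ :=
    (isCompact_univ_pi (fun _ : ℕ => isCompact_Icc)).isSeqCompact hgmem
  have hpt : ∀ m, Tendsto (fun n => ⟪u m, u (φ n)⟫) atTop (𝓝 (p m)) := by
    intro m
    exact (tendsto_pi_nhds.1 hconv) m
  -- convergence against every element of the span
  set K := (Submodule.span ℝ (Set.range u)).topologicalClosure with hK
  have hspan : ∀ s ∈ Submodule.span ℝ (Set.range u),
      ∃ l, Tendsto (fun n => ⟪s, u (φ n)⟫) atTop (𝓝 l) := by
    intro s hs
    induction hs using Submodule.span_induction with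
    | mem w hw =>
      obtain ⟨m, rfl⟩ := hw
      exact ⟨p m, hpt m⟩
    | zero => exact ⟨0, by simpa using tendsto_const_nhds⟩
    | add a b _ _ ha hb =>
      obtain ⟨la, hla⟩ := ha; obtain ⟨lb, hlb⟩ := hb
      exact ⟨la + lb, by simpa [inner_add_left] using hla.add hlb⟩
    | smul c a _ ha =>
      obtain ⟨la, hla⟩ := ha
      exact ⟨c * la, by simpa [real_inner_smul_left] using hla.const_mul c⟩
  -- convergence for every v
  have hlim : ∀ v : H, ∃ l, Tendsto (fun n => ⟪v, u (φ n)⟫) atTop (𝓝 l) := by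
    intro v
    haveI : CompleteSpace K := (Submodule.isClosed_topologicalClosure _).completeSpace_coe
    obtain ⟨a, haK, b, hb, rfl⟩ := K.exists_add_mem_mem_orthogonal v
    have hbz : ∀ k, ⟪b, u k⟫ = 0 := by
      intro k
      have huk : u k ∈ K :=
        Submodule.le_topologicalClosure _ (Submodule.subset_span ⟨k, rfl⟩)
      have := (Submodule.mem_orthogonal _ _).1 hb (u k) huk
      rw [real_inner_comm]; exact this
    have hsum : ∀ k, ⟪a + b, u k⟫ = ⟪a, u k⟫ := by
      intro k; rw [inner_add_left, hbz k, add_zero]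
    -- a is in the closure of the span: Cauchy argument
    have hac : a ∈ closure ((Submodule.span ℝ (Set.range u) : Submodule ℝ H) : Set H) := by
      rw [← Submodule.topologicalClosure_coe]; exact haK
    have hcauchy : CauchySeq (fun n => ⟪a, u (φ n)⟫) := by
      rw [Metric.cauchySeq_iff']
      intro ε hε
      have hM1 : (0:ℝ) < M + 1 := by linarith
      obtain ⟨s, hs, hdist⟩ := Metric.mem_closure_iff.1 hac (ε / (3 * (M+1))) (by positivity)
      obtain ⟨l, hl⟩ := hspan s hs
      have hsC : CauchySeq (fun n => ⟪s, u (φ n)⟫) := hl.cauchySeq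
      rw [Metric.cauchySeq_iff'] at hsC
      obtain ⟨N, hN⟩ := hsC (ε / 3) (by positivity)
      refine ⟨N, fun n hn => ?_⟩
      have hclose : ∀ k, |⟪a, u k⟫ - ⟪s, u k⟫| ≤ ε / 3 := by
        intro k
        rw [← inner_sub_left]
        calc |⟪a - s, u k⟫| ≤ ‖a - s‖ * ‖u k‖ := abs_real_inner_le_norm _ _
          _ ≤ (ε / (3 * (M+1))) * (M + 1) := by
              apply mul_le_mul _ (by linarith [hM k]) (norm_nonneg _) (by positivity)
              rw [dist_eq_norm] at hdist; linarith
          _ = ε / 3 := by field_simp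
      have h1 := hN n hn
      have h2 := hclose (φ n)
      have h3 := hclose (φ N)
      rw [Real.dist_eq] at h1 ⊢
      have := abs_sub_abs_le_abs_sub (⟪a, u (φ n)⟫ - ⟪a, u (φ N)⟫) 0
      calc |⟪a, u (φ n)⟫ - ⟪a, u (φ N)⟫|
          = |(⟪a, u (φ n)⟫ - ⟪s, u (φ n)⟫) + (⟪s, u (φ n)⟫ - ⟪s, u (φ N)⟫)
            + (⟪s, u (φ N)⟫ - ⟪a, u (φ N)⟫)| := by ring_nf
        _ ≤ |⟪a, u (φ n)⟫ - ⟪s, u (φ n)⟫| + |⟪s, u (φ n)⟫ - ⟪s, u (φ N)⟫|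
            + |⟪s, u (φ N)⟫ - ⟪a, u (φ N)⟫| := by
              exact le_trans (abs_add_le _ _) (by gcongr; exact abs_add_le _ _)
        _ < ε := by
              rw [abs_sub_comm (⟪s, u (φ N)⟫)] at *
              linarith
    obtain ⟨l, hl⟩ := cauchySeq_tendsto_of_complete hcauchy
    exact ⟨l, by simpa [hsum] using hl⟩
  -- build the weak limit via Riesz
  choose L hL using hlim
  have hadd : ∀ v v', L (v + v') = L v + L v' := by
    intro v v'
    refine tendsto_nhds_unique ?_ ((hL v).add (hL v'))
    simpa [inner_add_left] using hL (v + v')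
  have hsmul : ∀ (c : ℝ) v, L (c • v) = c * L v := by
    intro c v
    refine tendsto_nhds_unique ?_ ((hL v).const_mul c)
    simpa [real_inner_smul_left] using hL (c • v)
  have hbd : ∀ v, ‖L v‖ ≤ M * ‖v‖ := by
    intro v
    rw [Real.norm_eq_abs]
    have : Tendsto (fun n => |⟪v, u (φ n)⟫|) atTop (𝓝 |L v|) := (hL v).abs
    apply le_of_tendsto this
    apply Eventually.of_forall
    intro n
    calc |⟪v, u (φ n)⟫| ≤ ‖v‖ * ‖u (φ n)‖ := abs_real_inner_le_norm _ _
      _ ≤ ‖v‖ * M := by gcongr; exact hM _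
      _ = M * ‖v‖ := mul_comm _ _
  let F : H →ₗ[ℝ] ℝ :=
    { toFun := L, map_add' := hadd, map_smul' := hsmul }
  let F' : H →L[ℝ] ℝ := F.mkContinuous M hbd
  refine ⟨φ, hφ, (InnerProductSpace.toDual ℝ H).symm F', fun v => ?_⟩
  have : ⟪(InnerProductSpace.toDual ℝ H).symm F', v⟫ = F' v :=
    InnerProductSpace.toDual_symm_apply
  rw [real_inner_comm, this]
  exact hL v

end Aux

set_option maxHeartbeats 1000000 in
theorem stmt_15
    {H : Type*} [NormedAddCommGroup H] [InnerProductSpace ℝ H] [CompleteSpace H]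
    (C : Set H) (hCne : C.Nonempty) (hCcl : IsClosed C) (hCcv : Convex ℝ C)
    (f : H → ℝ) (hf : ConvexOn ℝ Set.univ f)
    (gradf : H → H)
    (hgrad : ∀ x d : H,
      Tendsto (fun t : ℝ => (f (x + t • d) - f x) / t) (nhdsWithin 0 (Set.Ioi 0))
        (nhds ⟪gradf x, d⟫))
    (PC : H → H)
    (hPC : ∀ x : H, PC x ∈ C ∧ ∀ z ∈ C, ⟪x - PC x, z - PC x⟫ ≤ 0)
    (θ δ βlo βhi : ℝ)
    (hθ : θ ∈ Set.Ioo (0:ℝ) 1) (hδ : δ ∈ Set.Ioo (0:ℝ) 1)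
    (hβlo : 0 < βlo) (hββ : βlo ≤ βhi)
    (β : ℕ → ℝ) (hβk : ∀ k, β k ∈ Set.Icc βlo βhi)
    (x z : ℕ → H) (α : ℕ → ℝ) (j : ℕ → ℕ)
    (hx0 : x 0 ∈ C)
    (hz : ∀ k, z k = x k - β k • gradf (x k))
    (hjA : ∀ k, f ((θ ^ j k) • PC (z k) + (1 - θ ^ j k) • x k)
        ≤ f (x k) - δ * θ ^ j k * ⟪gradf (x k), x k - PC (z k)⟫)
    (hjmin : ∀ k, ∀ i < j k, ¬ (f ((θ ^ i) • PC (z k) + (1 - θ ^ i) • x k)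
        ≤ f (x k) - δ * θ ^ i * ⟪gradf (x k), x k - PC (z k)⟫))
    (hα : ∀ k, α k = θ ^ j k)
    (flev : ℕ → ℝ)
    (hflev0 : flev 0 = f ((θ ^ j 0) • PC (z 0) + (1 - θ ^ j 0) • x 0))
    (hflevS : ∀ k, flev (k+1) =
        min (flev k) (f ((θ ^ j (k+1)) • PC (z (k+1)) + (1 - θ ^ j (k+1)) • x (k+1))))
    (hstep : ∀ k,
      (x (k+1) ∈ C ∧ ⟪x (k+1) - x k, x 0 - x k⟫ ≤ 0 ∧
        ⟪gradf (x k), x (k+1) - x k⟫ + f (x k) - flev k ≤ 0) ∧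
      ∀ y : H, y ∈ C → ⟪y - x k, x 0 - x k⟫ ≤ 0 →
        ⟪gradf (x k), y - x k⟫ + f (x k) - flev k ≤ 0 →
        ‖x (k+1) - x 0‖ ≤ ‖y - x 0‖)
    (hS : ∃ xs ∈ C, ∀ y ∈ C, f xs ≤ f y)
    (hUC : ∀ B : Set H, Bornology.IsBounded B → ∀ ε > 0, ∃ η > 0,
      ∀ a ∈ B, ∀ b ∈ B, ‖a - b‖ < η → ‖gradf a - gradf b‖ < ε)
    (xstar : H) (hxsC : xstar ∈ C) (hxsmin : ∀ y ∈ C, f xstar ≤ f y)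
    (hxsproj : ∀ y : H, y ∈ C → (∀ w ∈ C, f y ≤ f w) → ‖xstar - x 0‖ ≤ ‖y - x 0‖)
    : Tendsto x atTop (nhds xstar) := by
  obtain ⟨hθ0, hθ1⟩ := hθ
  obtain ⟨hδ0, hδ1⟩ := hδ
  have subgrad : ∀ a b : H, f a + ⟪gradf a, b - a⟫ ≤ f b := aux_subgrad f hf gradf hgrad
  -- iterates stay in C
  have hxC : ∀ k, x k ∈ C := by
    intro k
    cases k with
    | zero => exact hx0
    | succ m => exact (hstep m).1.1
  set Γ : ℕ → ℝ := fun k => ⟪gradf (x k), x k - PC (z k)⟫ with hΓdef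
  set d : ℕ → ℝ := fun k => ‖x k - PC (z k)‖ with hddef
  -- basic inequality from projection
  have hΓd : ∀ k, d k ^ 2 ≤ β k * Γ k := by
    intro k
    have h1 := (hPC (z k)).2 (x k) (hxC k)
    have h2 : z k - PC (z k) = (x k - PC (z k)) - β k • gradf (x k) := by
      rw [hz k]; abel
    rw [h2, inner_sub_left, real_inner_smul_left, real_inner_self_eq_norm_sq] at h1
    simp only [hddef, hΓdef]
    linarith
  have hβpos : ∀ k, 0 < β k := fun k => lt_of_lt_of_le hβlo (hβk k).1
  have hΓ0 : ∀ k, 0 ≤ Γ k := by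
    intro k
    nlinarith [hΓd k, sq_nonneg (d k), hβpos k]
  -- the Armijo point is in C and dominates fstar
  have hyC : ∀ k, (θ ^ j k) • PC (z k) + (1 - θ ^ j k) • x k ∈ C := by
    intro k
    have h1 : (0:ℝ) ≤ θ ^ j k := by positivity
    have h2 : θ ^ j k ≤ 1 := pow_le_one₀ hθ0.le hθ1.le
    exact hCcv (hPC (z k)).1 (hxC k) h1 (by linarith) (by ring)
  have hflev_ge : ∀ k, f xstar ≤ flev k := by
    intro k
    induction k with
    | zero => rw [hflev0]; exact hxsmin _ (hyC 0)
    | succ m ih => rw [hflevS m]; exact le_min ih (hxsmin _ (hyC (m+1)))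
  have hflev_le : ∀ k, flev k ≤ f (x k) - δ * θ ^ j k * Γ k := by
    intro k
    cases k with
    | zero => rw [hflev0]; exact hjA 0
    | succ m => rw [hflevS m]; exact le_trans (min_le_right _ _) (hjA (m+1))
  have hfx_ge : ∀ k, flev k ≤ f (x k) := by
    intro k
    have h1 := hflev_le k
    have h2 : 0 ≤ δ * θ ^ j k * Γ k := mul_nonneg (by positivity) (hΓ0 k)
    linarith
  -- xstar in the halfspace H_k
  have hHs : ∀ k, ⟪gradf (x k), xstar - x k⟫ + f (x k) - flev k ≤ 0 := by
    intro k
    have := subgrad (x k) xstar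
    have := hflev_ge k
    linarith
  -- the constraint set
  set Kset : ℕ → Set H := fun k => {y | y ∈ C ∧ ⟪y - x k, x 0 - x k⟫ ≤ 0 ∧
    ⟪gradf (x k), y - x k⟫ + f (x k) - flev k ≤ 0} with hKdef
  have hKcv : ∀ k, Convex ℝ (Kset k) := by
    intro k y1 hy1 y2 hy2 s t hs ht hst
    have e : s • y1 + t • y2 - x k = s • (y1 - x k) + t • (y2 - x k) := by
      have h1 : (x k) = s • x k + t • x k := by rw [← add_smul, hst, one_smul]
      calc s • y1 + t • y2 - x k = s • y1 + t • y2 - (s • x k + t • x k) := by rw [← h1]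
        _ = s • (y1 - x k) + t • (y2 - x k) := by rw [smul_sub, smul_sub]; abel
    refine ⟨hCcv hy1.1 hy2.1 hs ht hst, ?_, ?_⟩
    · show ⟪s • y1 + t • y2 - x k, x 0 - x k⟫ ≤ 0
      rw [e, inner_add_left, real_inner_smul_left, real_inner_smul_left]
      nlinarith [mul_le_mul_of_nonneg_left hy1.2.1 hs, mul_le_mul_of_nonneg_left hy2.2.1 ht]
    · show ⟪gradf (x k), s • y1 + t • y2 - x k⟫ + f (x k) - flev k ≤ 0
      rw [e, inner_add_right, real_inner_smul_right, real_inner_smul_right]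
      have hb1 : s * ⟪gradf (x k), y1 - x k⟫ ≤ s * (flev k - f (x k)) :=
        mul_le_mul_of_nonneg_left (by linarith [hy1.2.2]) hs
      have hb2 : t * ⟪gradf (x k), y2 - x k⟫ ≤ t * (flev k - f (x k)) :=
        mul_le_mul_of_nonneg_left (by linarith [hy2.2.2]) ht
      have hsum : s * (flev k - f (x k)) + t * (flev k - f (x k)) = flev k - f (x k) := by
        rw [← add_mul, hst, one_mul]
      linarith
  -- xstar in W_k
  have hW : ∀ k, ⟪xstar - x k, x 0 - x k⟫ ≤ 0 := by
    intro k
    induction k with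
    | zero => simp
    | succ m ih =>
      have hxsK : xstar ∈ Kset m := ⟨hxsC, ih, hHs m⟩
      have hxK : x (m+1) ∈ Kset m :=
        ⟨(hstep m).1.1, (hstep m).1.2.1, (hstep m).1.2.2⟩
      have hmin : ∀ y ∈ Kset m, ‖x (m+1) - x 0‖ ≤ ‖y - x 0‖ := by
        intro y hy; exact (hstep m).2 y hy.1 hy.2.1 hy.2.2
      have h1 := aux_vi (Kset m) (hKcv m) (x (m+1)) (x 0) hxK hmin xstar hxsK
      rw [real_inner_comm] at h1
      exact h1
  set R : ℝ := ‖xstar - x 0‖ with hRdef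
  have hR0 : 0 ≤ R := norm_nonneg _
  have hxR : ∀ k, ‖x k - x 0‖ ≤ R := by
    intro k
    cases k with
    | zero => simpa using hR0
    | succ m => exact (hstep m).2 xstar hxsC (hW m) (hHs m)
  have hxstar_ineq : ∀ k, ‖x k - xstar‖^2 + ‖x k - x 0‖^2 ≤ R^2 := by
    intro k
    have h1 := hW k
    have e : xstar - x 0 = (xstar - x k) + (x k - x 0) := by abel
    have h2 : R^2 = ‖xstar - x k‖^2 + 2*⟪xstar - x k, x k - x 0⟫ + ‖x k - x 0‖^2 := by
      rw [hRdef, e, norm_add_sq_real]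
    have h3 : ⟪xstar - x k, x k - x 0⟫ = - ⟪xstar - x k, x 0 - x k⟫ := by
      rw [← inner_neg_right]; congr 1; abel
    rw [norm_sub_rev (x k) xstar]
    linarith
  set a : ℕ → ℝ := fun k => ‖x k - x 0‖^2 with hadef
  have ha_step : ∀ k, a k + ‖x (k+1) - x k‖^2 ≤ a (k+1) := by
    intro k
    have h1 := (hstep k).1.2.1
    have e : x (k+1) - x 0 = (x (k+1) - x k) + (x k - x 0) := by abel
    have h2 : ‖x (k+1) - x 0‖^2
        = ‖x (k+1) - x k‖^2 + 2*⟪x (k+1) - x k, x k - x 0⟫ + ‖x k - x 0‖^2 := by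
      rw [e, norm_add_sq_real]
    have h3 : ⟪x (k+1) - x k, x k - x 0⟫ = - ⟪x (k+1) - x k, x 0 - x k⟫ := by
      rw [← inner_neg_right]; congr 1; abel
    simp only [hadef]
    linarith
  have ha_mono : Monotone a := by
    apply monotone_nat_of_le_succ
    intro k
    have := ha_step k
    nlinarith [sq_nonneg (‖x (k+1) - x k‖)]
  have ha_bdd : ∀ k, a k ≤ R^2 := by
    intro k
    have := hxR k
    simp only [hadef]
    nlinarith [norm_nonneg (x k - x 0)]
  obtain ⟨ℓ, hℓ⟩ : ∃ ℓ, Tendsto a atTop (𝓝 ℓ) := by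
    rcases tendsto_of_monotone ha_mono with h | h
    · exfalso
      obtain ⟨k, hk⟩ := (tendsto_atTop.1 h (R^2 + 1)).exists
      linarith [ha_bdd k]
    · exact h
  have hℓR : ℓ ≤ R^2 := le_of_tendsto hℓ (Eventually.of_forall ha_bdd)
  have haℓ : ∀ k, a k ≤ ℓ := fun k => ha_mono.ge_of_tendsto hℓ k
  -- consecutive differences tend to 0
  have hdiff : Tendsto (fun k => ‖x (k+1) - x k‖) atTop (𝓝 0) := by
    have h1 : Tendsto (fun k => a (k+1) - a k) atTop (𝓝 0) := by
      have h2 := (hℓ.comp (tendsto_add_atTop_nat 1)).sub hℓ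
      simpa using h2
    have h3 : Tendsto (fun k => ‖x (k+1) - x k‖^2) atTop (𝓝 0) :=
      squeeze_zero (fun k => sq_nonneg _) (fun k => by linarith [ha_step k]) h1
    have h2 := (Real.continuous_sqrt.tendsto 0).comp h3
    simp only [Function.comp_def, Real.sqrt_zero] at h2
    convert h2 using 2 with k
    rw [Real.sqrt_sq (norm_nonneg _)]
  -- gradient bound
  obtain ⟨G, hG0, hG⟩ := aux_gradbound gradf hUC (x 0) R
  have hgx : ∀ k, ‖gradf (x k)‖ ≤ G := fun k => hG (x k) (hxR k)
  have hΓCS : ∀ k, Γ k ≤ ‖gradf (x k)‖ * d k := fun k => real_inner_le_norm _ _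
  set D : ℝ := βhi * G with hDdef
  have hD0 : 0 ≤ D := mul_nonneg (le_trans hβlo.le hββ) hG0
  have hd_le : ∀ k, d k ≤ D := by
    intro k
    rcases eq_or_lt_of_le (norm_nonneg (x k - PC (z k)) : (0:ℝ) ≤ d k) with h | h
    · have hz0 : d k = 0 := h.symm
      rw [hz0]; exact hD0
    · have h1 := hΓd k
      have h2 := hΓCS k
      have h3 : β k ≤ βhi := (hβk k).2
      have h4 := hgx k
      have h5 : β k * Γ k ≤ β k * (‖gradf (x k)‖ * d k) :=
        mul_le_mul_of_nonneg_left h2 (hβpos k).le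
      have h6 : β k * (‖gradf (x k)‖ * d k) ≤ βhi * (G * d k) := by
        apply mul_le_mul h3 (mul_le_mul_of_nonneg_right h4 h.le) (by positivity)
          (le_trans hβlo.le hββ)
      nlinarith [h1, h]
  -- f(x k) - flev k → 0
  have hfxflev : Tendsto (fun k => f (x k) - flev k) atTop (𝓝 0) := by
    apply squeeze_zero (fun k => by linarith [hfx_ge k])
      (g := fun k => G * ‖x (k+1) - x k‖)
    · intro k
      have h1 := (hstep k).1.2.2
      have h2 : ⟪gradf (x k), x k - x (k+1)⟫ ≤ G * ‖x (k+1) - x k‖ := by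
        calc ⟪gradf (x k), x k - x (k+1)⟫ ≤ ‖gradf (x k)‖ * ‖x k - x (k+1)‖ :=
              real_inner_le_norm _ _
          _ = ‖gradf (x k)‖ * ‖x (k+1) - x k‖ := by rw [norm_sub_rev]
          _ ≤ G * ‖x (k+1) - x k‖ := by
              apply mul_le_mul_of_nonneg_right (hgx k) (norm_nonneg _)
      have h3 : ⟪gradf (x k), x (k+1) - x k⟫ = - ⟪gradf (x k), x k - x (k+1)⟫ := by
        rw [← inner_neg_right]; congr 1; abel
      rw [h3] at h1
      linarith
    · simpa using hdiff.const_mul G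
  -- α Γ → 0
  have hαΓ : Tendsto (fun k => θ ^ j k * Γ k) atTop (𝓝 0) := by
    apply squeeze_zero (fun k => mul_nonneg (by positivity) (hΓ0 k))
      (g := fun k => (f (x k) - flev k) / δ)
    · intro k
      rw [le_div_iff₀ hδ0]
      have := hflev_le k
      nlinarith
    · simpa using hfxflev.div_const δ
  -- Γ → 0
  have hΓten : Tendsto Γ atTop (𝓝 0) := by
    apply tendsto_order.2
    constructor
    · intro b hb
      exact Eventually.of_forall fun k => lt_of_lt_of_le hb (hΓ0 k)
    · intro ε hε
      have hD1 : (0:ℝ) < D + 1 := by linarith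
      have h1δ : (0:ℝ) < 1 - δ := by linarith
      obtain ⟨η, hη, hηp⟩ := hUC (Metric.closedBall (x 0) (R + D + 1))
        Metric.isBounded_closedBall ((1 - δ) * ε / (D + 1)) (by positivity)
      set c := min ε (ε * (θ * η) / (D + 1)) with hcdef
      have hc0 : 0 < c := lt_min hε (by positivity)
      filter_upwards [hαΓ.eventually_lt_const hc0] with k hk
      by_contra hcon
      push_neg at hcon
      have hΓpos : 0 < Γ k := lt_of_lt_of_le hε hcon
      cases hjk : j k with
      | zero =>
        rw [hjk] at hk
        simp only [pow_zero, one_mul] at hk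
        linarith [min_le_left ε (ε * (θ * η) / (D + 1))]
      | succ m =>
        have ht0 : (0:ℝ) < θ ^ m := by positivity
        have htle1 : θ ^ m ≤ 1 := pow_le_one₀ hθ0.le hθ1.le
        have h3 : θ ^ j k * ε ≤ θ ^ j k * Γ k :=
          mul_le_mul_of_nonneg_left hcon (by positivity)
        have h4 : θ ^ j k * ε < ε * (θ * η) / (D+1) :=
          lt_of_le_of_lt h3 (lt_of_lt_of_le hk (min_le_right _ _))
        have h5 : θ ^ j k < θ * η / (D + 1) := by
          have h5a : θ ^ j k * ε < (θ * η / (D+1)) * ε := by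
            calc θ ^ j k * ε < ε * (θ * η) / (D+1) := h4
              _ = (θ * η / (D+1)) * ε := by ring
          exact lt_of_mul_lt_mul_right h5a hε.le
        have h5b : θ ^ m < η / (D + 1) := by
          rw [hjk, pow_succ'] at h5
          have h5c : θ * θ ^ m < θ * (η / (D + 1)) := by
            calc θ * θ ^ m < θ * η / (D+1) := h5
              _ = θ * (η / (D + 1)) := by ring
          exact lt_of_mul_lt_mul_left h5c hθ0.le
        have hfail := hjmin k m (by rw [hjk]; exact Nat.lt_succ_self m)
        push_neg at hfail
        set p : H := (θ ^ m) • PC (z k) + (1 - θ ^ m) • x k with hpdef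
        have hpe : p = x k + (θ ^ m) • (PC (z k) - x k) := by
          simp only [hpdef]; module
        have hsub := subgrad p (x k)
        have hxp : x k - p = (θ ^ m) • (x k - PC (z k)) := by
          rw [hpe]; module
        have hip : ⟪gradf p, x k - p⟫ = θ ^ m * ⟪gradf p, x k - PC (z k)⟫ := by
          rw [hxp, real_inner_smul_right]
        have h6 : ⟪gradf p, x k - PC (z k)⟫ < δ * Γ k := by
          have h6a : f (x k) - δ * θ ^ m * Γ k < f p := hfail
          have h6b : f p + θ ^ m * ⟪gradf p, x k - PC (z k)⟫ ≤ f (x k) := by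
            rw [← hip]; exact hsub
          have h6c : θ ^ m * ⟪gradf p, x k - PC (z k)⟫ < θ ^ m * (δ * Γ k) := by
            linarith
          exact lt_of_mul_lt_mul_left h6c ht0.le
        have hxkB : x k ∈ Metric.closedBall (x 0) (R + D + 1) := by
          rw [Metric.mem_closedBall, dist_eq_norm]; linarith [hxR k]
        have hnrm : ‖(θ^m) • (PC (z k) - x k)‖ ≤ D := by
          rw [norm_smul, Real.norm_eq_abs, abs_of_pos ht0, norm_sub_rev]
          calc θ^m * ‖x k - PC (z k)‖ ≤ 1 * ‖x k - PC (z k)‖ :=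
                mul_le_mul_of_nonneg_right htle1 (norm_nonneg _)
            _ = d k := one_mul _
            _ ≤ D := hd_le k
        have hpB : p ∈ Metric.closedBall (x 0) (R + D + 1) := by
          rw [Metric.mem_closedBall, dist_eq_norm]
          have e : p - x 0 = (x k - x 0) + (θ^m) • (PC (z k) - x k) := by
            rw [hpe]; abel
          rw [e]
          calc ‖(x k - x 0) + (θ^m) • (PC (z k) - x k)‖
              ≤ ‖x k - x 0‖ + ‖(θ^m) • (PC (z k) - x k)‖ := norm_add_le _ _
            _ ≤ R + D + 1 := by linarith [hxR k]
        have hdist : ‖x k - p‖ < η := by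
          rw [hxp, norm_smul, Real.norm_eq_abs, abs_of_pos ht0]
          calc θ^m * ‖x k - PC (z k)‖ ≤ θ^m * (D+1) := by
                apply mul_le_mul_of_nonneg_left _ ht0.le
                have := hd_le k
                simp only [hddef] at this
                linarith
            _ < (η/(D+1)) * (D+1) := by
                apply mul_lt_mul_of_pos_right h5b hD1
            _ = η := by field_simp
        have hUCk := hηp (x k) hxkB p hpB hdist
        have h7 : Γ k - δ * Γ k < ‖gradf (x k) - gradf p‖ * d k := by
          have h7a : ⟪gradf (x k) - gradf p, x k - PC (z k)⟫
              = Γ k - ⟪gradf p, x k - PC (z k)⟫ := by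
            rw [inner_sub_left]
          have h7b : ⟪gradf (x k) - gradf p, x k - PC (z k)⟫
              ≤ ‖gradf (x k) - gradf p‖ * d k := real_inner_le_norm _ _
          linarith
        have h8 : ‖gradf (x k) - gradf p‖ * d k ≤ ((1-δ)*ε/(D+1)) * (D+1) := by
          apply mul_le_mul hUCk.le _ (norm_nonneg _) (by positivity)
          linarith [hd_le k]
        have h9 : ((1-δ)*ε/(D+1)) * (D+1) = (1-δ)*ε := by field_simp
        nlinarith
  -- d → 0
  have hd0 : Tendsto d atTop (𝓝 0) := by
    have h1 : Tendsto (fun k => d k ^ 2) atTop (𝓝 0) := by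
      apply squeeze_zero (fun k => sq_nonneg _) (g := fun k => βhi * Γ k)
      · intro k
        calc d k ^ 2 ≤ β k * Γ k := hΓd k
          _ ≤ βhi * Γ k := mul_le_mul_of_nonneg_right (hβk k).2 (hΓ0 k)
      · simpa using hΓten.const_mul βhi
    have h2 := (Real.continuous_sqrt.tendsto 0).comp h1
    simp only [Function.comp_def, Real.sqrt_zero] at h2
    convert h2 using 2 with k
    rw [Real.sqrt_sq (norm_nonneg _)]
  -- f(x k) → f xstar
  have hfx : Tendsto (fun k => f (x k)) atTop (𝓝 (f xstar)) := by
    have hkey : ∀ k, f (x k) - f xstar ≤ ((1/βlo) * (2*R + 2*D)) * d k := by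
      intro k
      have h1 := subgrad (x k) xstar
      have hgr : gradf (x k) = (1/β k) • (x k - z k) := by
        rw [hz k, show x k - (x k - β k • gradf (x k)) = β k • gradf (x k) from by abel,
          smul_smul, one_div_mul_cancel (hβpos k).ne', one_smul]
      have h2 : ⟪gradf (x k), x k - xstar⟫ = (1/β k) * ⟪x k - z k, x k - xstar⟫ := by
        rw [hgr, real_inner_smul_left]
      have hsplit : ⟪x k - z k, x k - xstar⟫
          = ⟪x k - PC (z k), x k - xstar⟫ + ⟪PC (z k) - z k, x k - xstar⟫ := by
        rw [← inner_add_left]; congr 1; abel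
      have hprojin : ⟪z k - PC (z k), xstar - PC (z k)⟫ ≤ 0 := (hPC (z k)).2 xstar hxsC
      have hsecond : ⟪PC (z k) - z k, x k - xstar⟫ ≤ ‖z k - PC (z k)‖ * d k := by
        have e1 : ⟪PC (z k) - z k, x k - xstar⟫ = ⟪z k - PC (z k), xstar - x k⟫ := by
          rw [← inner_neg_neg]; congr 1 <;> abel
        have e2 : ⟪z k - PC (z k), xstar - x k⟫
            = ⟪z k - PC (z k), xstar - PC (z k)⟫ + ⟪z k - PC (z k), PC (z k) - x k⟫ := by
          rw [← inner_add_right]; congr 1; abel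
        have e3 : ⟪z k - PC (z k), PC (z k) - x k⟫
            ≤ ‖z k - PC (z k)‖ * ‖PC (z k) - x k‖ := real_inner_le_norm _ _
        have e4 : ‖PC (z k) - x k‖ = d k := by rw [hddef]; exact norm_sub_rev _ _
        rw [e1, e2]
        rw [e4] at e3
        linarith
      have hfirst : ⟪x k - PC (z k), x k - xstar⟫ ≤ d k * ‖x k - xstar‖ :=
        real_inner_le_norm _ _
      have hxkxs : ‖x k - xstar‖ ≤ 2*R := by
        have e : x k - xstar = (x k - x 0) + (x 0 - xstar) := by abel
        have e5 : ‖x 0 - xstar‖ = R := by rw [hRdef]; exact norm_sub_rev _ _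
        calc ‖x k - xstar‖ ≤ ‖x k - x 0‖ + ‖x 0 - xstar‖ := by rw [e]; exact norm_add_le _ _
          _ ≤ 2*R := by rw [e5]; linarith [hxR k]
      have hzPC : ‖z k - PC (z k)‖ ≤ 2*D := by
        have e : z k - PC (z k) = (x k - PC (z k)) - β k • gradf (x k) := by
          rw [hz k]; abel
        rw [e]
        have e6 : ‖β k • gradf (x k)‖ ≤ βhi * G := by
          rw [norm_smul, Real.norm_eq_abs, abs_of_pos (hβpos k)]
          exact mul_le_mul (hβk k).2 (hgx k) (norm_nonneg _) (le_trans hβlo.le hββ)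
        calc ‖(x k - PC (z k)) - β k • gradf (x k)‖
            ≤ ‖x k - PC (z k)‖ + ‖β k • gradf (x k)‖ := norm_sub_le _ _
          _ ≤ D + βhi * G := add_le_add (hd_le k) e6
          _ = 2*D := by rw [hDdef]; ring
      have hd0k : 0 ≤ d k := norm_nonneg _
      have hs_le : ⟪x k - z k, x k - xstar⟫ ≤ d k * (2*R + 2*D) := by
        rw [hsplit]
        have hb1 : ⟪x k - PC (z k), x k - xstar⟫ ≤ d k * (2*R) := by
          calc ⟪x k - PC (z k), x k - xstar⟫ ≤ d k * ‖x k - xstar‖ := hfirst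
            _ ≤ d k * (2*R) := mul_le_mul_of_nonneg_left hxkxs hd0k
        have hb2 : ⟪PC (z k) - z k, x k - xstar⟫ ≤ (2*D) * d k := by
          calc ⟪PC (z k) - z k, x k - xstar⟫ ≤ ‖z k - PC (z k)‖ * d k := hsecond
            _ ≤ (2*D) * d k := mul_le_mul_of_nonneg_right hzPC hd0k
        nlinarith
      have h5 : f (x k) - f xstar ≤ (1/β k) * ⟪x k - z k, x k - xstar⟫ := by
        have e4 : ⟪gradf (x k), xstar - x k⟫ = - ⟪gradf (x k), x k - xstar⟫ := by
          rw [← inner_neg_right]; congr 1; abel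
        rw [e4] at h1
        linarith [h2.ge, h2.le]
      have hb1 : (1/β k) * ⟪x k - z k, x k - xstar⟫ ≤ (1/β k) * (d k * (2*R+2*D)) :=
        mul_le_mul_of_nonneg_left hs_le (by have := hβpos k; positivity)
      have hb2 : (1/β k) * (d k * (2*R+2*D)) ≤ (1/βlo) * (d k * (2*R+2*D)) := by
        apply mul_le_mul_of_nonneg_right
          (one_div_le_one_div_of_le hβlo (hβk k).1)
          (mul_nonneg hd0k (by linarith))
      calc f (x k) - f xstar ≤ (1/β k) * ⟪x k - z k, x k - xstar⟫ := h5
        _ ≤ (1/β k) * (d k * (2*R+2*D)) := hb1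
        _ ≤ (1/βlo) * (d k * (2*R+2*D)) := hb2
        _ = ((1/βlo) * (2*R + 2*D)) * d k := by ring
    have hten0 : Tendsto (fun k => f (x k) - f xstar) atTop (𝓝 0) := by
      apply squeeze_zero (fun k => by linarith [hxsmin (x k) (hxC k)]) hkey
      simpa using hd0.const_mul ((1/βlo) * (2*R+2*D))
    have h6 := hten0.add_const (f xstar)
    simpa using h6
  -- weak cluster point
  have hxbound : ∀ k, ‖x k‖ ≤ ‖x 0‖ + R := by
    intro k
    calc ‖x k‖ = ‖x k - x 0 + x 0‖ := by congr 1; abel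
      _ ≤ ‖x k - x 0‖ + ‖x 0‖ := norm_add_le _ _
      _ ≤ ‖x 0‖ + R := by linarith [hxR k]
  obtain ⟨φ, hφ, w, hw⟩ := weak_seq_compact x (‖x 0‖ + R) hxbound
  have hwC : w ∈ C := by
    have h1 : ∀ n, ⟪w - PC w, x (φ n)⟫ - ⟪w - PC w, PC w⟫ ≤ 0 := by
      intro n
      have h2 := (hPC w).2 (x (φ n)) (hxC (φ n))
      rw [inner_sub_right] at h2
      exact h2
    have h2 : Tendsto (fun n => ⟪w - PC w, x (φ n)⟫ - ⟪w - PC w, PC w⟫) atTop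
        (𝓝 (⟪w - PC w, w⟫ - ⟪w - PC w, PC w⟫)) := (hw (w - PC w)).sub_const _
    have h3 : ⟪w - PC w, w⟫ - ⟪w - PC w, PC w⟫ ≤ 0 :=
      le_of_tendsto h2 (Eventually.of_forall h1)
    have h4 : ⟪w - PC w, w - PC w⟫ ≤ 0 := by rw [inner_sub_right]; exact h3
    have h5 : w - PC w = 0 := real_inner_self_nonpos.1 h4
    have h6 : w = PC w := by rwa [sub_eq_zero] at h5
    rw [h6]; exact (hPC w).1
  have hwmin : f w ≤ f xstar := by
    have h1 : ∀ n, f w + (⟪gradf w, x (φ n)⟫ - ⟪gradf w, w⟫) ≤ f (x (φ n)) := by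
      intro n
      have h2 := subgrad w (x (φ n))
      rwa [inner_sub_right] at h2
    have h2 : Tendsto (fun n => f w + (⟪gradf w, x (φ n)⟫ - ⟪gradf w, w⟫)) atTop
        (𝓝 (f w + (⟪gradf w, w⟫ - ⟪gradf w, w⟫))) :=
      ((hw (gradf w)).sub_const _).const_add _
    have h3 : Tendsto (fun n => f (x (φ n))) atTop (𝓝 (f xstar)) :=
      hfx.comp hφ.tendsto_atTop
    have h4 := le_of_tendsto_of_tendsto' h2 h3 h1
    simpa using h4
  have hRw : R ≤ ‖w - x 0‖ :=
    hxsproj w hwC (fun yy hyy => le_trans hwmin (hxsmin yy hyy))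
  have hℓeq : ℓ = R ^ 2 := by
    have hℓ0 : (0:ℝ) ≤ ℓ := le_trans (sq_nonneg ‖x 0 - x 0‖) (haℓ 0)
    have hsq : Real.sqrt ℓ * Real.sqrt ℓ = ℓ := Real.mul_self_sqrt hℓ0
    have hsℓ0 : 0 ≤ Real.sqrt ℓ := Real.sqrt_nonneg _
    have h1 : ∀ n, ⟪w - x 0, x (φ n)⟫ - ⟪w - x 0, x 0⟫ ≤ ‖w - x 0‖ * Real.sqrt ℓ := by
      intro n
      have e : ⟪w - x 0, x (φ n)⟫ - ⟪w - x 0, x 0⟫ = ⟪w - x 0, x (φ n) - x 0⟫ := by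
        rw [inner_sub_right]
      rw [e]
      calc ⟪w - x 0, x (φ n) - x 0⟫ ≤ ‖w - x 0‖ * ‖x (φ n) - x 0‖ :=
            real_inner_le_norm _ _
        _ ≤ ‖w - x 0‖ * Real.sqrt ℓ := by
            apply mul_le_mul_of_nonneg_left _ (norm_nonneg _)
            have h2 := haℓ (φ n)
            have e2 : ‖x (φ n) - x 0‖ = Real.sqrt (a (φ n)) := by
              simp only [hadef]; rw [Real.sqrt_sq (norm_nonneg _)]
            rw [e2]
            exact Real.sqrt_le_sqrt h2
    have h2 : Tendsto (fun n => ⟪w - x 0, x (φ n)⟫ - ⟪w - x 0, x 0⟫) atTop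
        (𝓝 (⟪w - x 0, w⟫ - ⟪w - x 0, x 0⟫)) := (hw (w - x 0)).sub_const _
    have h3 : ‖w - x 0‖^2 ≤ ‖w - x 0‖ * Real.sqrt ℓ := by
      have h4 := le_of_tendsto h2 (Eventually.of_forall h1)
      rwa [← inner_sub_right, real_inner_self_eq_norm_sq] at h4
    have hcs : ‖w - x 0‖ ≤ Real.sqrt ℓ := by
      rcases eq_or_lt_of_le (norm_nonneg (w - x 0)) with h | h
      · rw [← h]; exact hsℓ0
      · rw [sq] at h3
        exact le_of_mul_le_mul_left h3 h
    have hRs : R ≤ Real.sqrt ℓ := le_trans hRw hcs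
    have hR2 : R^2 ≤ ℓ := by nlinarith
    exact le_antisymm hℓR hR2
  -- conclusion
  have hfinal : Tendsto (fun k => ‖x k - xstar‖ ^ 2) atTop (𝓝 0) := by
    apply squeeze_zero (fun k => sq_nonneg _) (g := fun k => R^2 - a k)
    · intro k
      have := hxstar_ineq k
      simp only [hadef]
      linarith
    · rw [← hℓeq] at *
      have := hℓ.const_sub ℓ
      simpa using this
  rw [tendsto_iff_norm_sub_tendsto_zero]
  have h2 := (Real.continuous_sqrt.tendsto 0).comp hfinal
  simp only [Function.comp_def, Real.sqrt_zero] at h2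
  convert h2 using 2 with k
  rw [Real.sqrt_sq (norm_nonneg _)]
end
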